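/- Let ρ be a nonzero positive semidefinite complex n × n matrix, let τ be a positive semidefinite n × n matrix with trace 1, let λ ∈ (0, 1], and let 0 ≤ t₁ ≤ t₂. With N_t(ρ) = ρ / max(Tr ρ, t) and Δ_λ(X) = (1−λ)X + λ·I/n, we have −Tr(τ · log Δ_λ(N_{t₁}(ρ))) ≤ −Tr(τ · log Δ_λ(N_{t₂}(ρ))), where log denotes the matrix logarithm obtained by applying the real logarithm to the eigenvalues in a spectral decomposition of the (positive definite) Hermitian argument. Hence the cross-entropy loss L_t is monotone nondecreasing in the hyperparameter t. -/

import Mathlib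

open Matrix ComplexOrder

/-- Matrix logarithm of a Hermitian matrix, obtained by applying the real logarithm to the
eigenvalues in a spectral decomposition (and `0` on non-Hermitian input). -/
noncomputable def matLog {n : Type*} [Fintype n] [DecidableEq n]
    (H : Matrix n n ℂ) : Matrix n n ℂ :=
  if hH : H.IsHermitian then
    (hH.eigenvectorUnitary : Matrix n n ℂ) *
      Matrix.diagonal (fun i => (Real.log (hH.eigenvalues i) : ℂ)) *
      star (hH.eigenvectorUnitary : Matrix n n ℂ)
  else 0

/-- The depolarizing channel `Δ_λ(ρ) = (1 - λ) ρ + λ I / n` on `n × n` complex matrices. -/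
noncomputable def depol {n : Type*} [Fintype n] [DecidableEq n]
    (l : ℝ) (ρ : Matrix n n ℂ) : Matrix n n ℂ :=
  ((1 - l : ℝ) : ℂ) • ρ + ((l / (Fintype.card n) : ℝ) : ℂ) • (1 : Matrix n n ℂ)

/-- Thresholded normalization `N_t(ρ) = ρ / max (Tr ρ) t` (the trace of a positive
semidefinite matrix is real, and is taken via the real part). -/
noncomputable def normThresh {n : Type*} [Fintype n]
    (t : ℝ) (ρ : Matrix n n ℂ) : Matrix n n ℂ :=
  (max ρ.trace.re t)⁻¹ • ρ


lemma matLog_eq_cfc {n : Type*} [Fintype n] [DecidableEq n] {H : Matrix n n ℂ}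
    (hH : H.IsHermitian) : matLog H = cfc Real.log H := by
  rw [matLog, dif_pos hH, hH.cfc_eq Real.log]
  rfl

lemma psd_real_smul {n : Type*} [Fintype n] {ρ : Matrix n n ℂ} (h : ρ.PosSemidef) {a : ℝ}
    (ha : 0 ≤ a) : (a • ρ).PosSemidef := by
  refine Matrix.PosSemidef.of_dotProduct_mulVec_nonneg ?_ ?_
  · have := h.1
    unfold Matrix.IsHermitian at *
    rw [conjTranspose_smul, this, star_trivial]
  · intro x
    have h2 := h.dotProduct_mulVec_nonneg x
    rw [smul_mulVec, dotProduct_smul, Complex.real_smul]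
    exact mul_nonneg (by exact_mod_cast ha) h2

lemma herm_comb {n : Type*} [Fintype n] [DecidableEq n] {ρ : Matrix n n ℂ}
    (h : ρ.IsHermitian) (a b : ℝ) : (a • ρ + b • (1 : Matrix n n ℂ)).IsHermitian := by
  unfold Matrix.IsHermitian at *
  rw [conjTranspose_add, conjTranspose_smul, conjTranspose_smul, h, conjTranspose_one,
    star_trivial, star_trivial]

open scoped MatrixOrder in
lemma psd_exists_ct {n : Type*} [Fintype n] [DecidableEq n] {D : Matrix n n ℂ}
    (hD : D.PosSemidef) : ∃ B : Matrix n n ℂ, D = Bᴴ * B := by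
  have h0 : 0 ≤ D := Matrix.nonneg_iff_posSemidef.mpr hD
  refine ⟨CFC.sqrt D, ?_⟩
  rw [← star_eq_conjTranspose, (CFC.sqrt_nonneg D).isSelfAdjoint.star_eq,
    CFC.sqrt_mul_sqrt_self D h0]

lemma trace_mul_psd_re_nonneg {n : Type*} [Fintype n] [DecidableEq n]
    {τ D : Matrix n n ℂ} (hτ : τ.PosSemidef) (hD : D.PosSemidef) :
    0 ≤ (τ * D).trace.re := by
  obtain ⟨B, rfl⟩ := psd_exists_ct hD
  rw [← mul_assoc, trace_mul_cycle]
  have hM := hτ.mul_mul_conjTranspose_same B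
  rw [Matrix.trace, Complex.re_sum]
  apply Finset.sum_nonneg
  intro i _
  have h2 := hM.dotProduct_mulVec_nonneg (Pi.single i 1)
  have he : star (Pi.single i 1 : n → ℂ) ⬝ᵥ ((B * τ * Bᴴ) *ᵥ Pi.single i 1)
      = (B * τ * Bᴴ) i i := by
    simp [dotProduct, mulVec, Pi.single_apply, apply_ite (star : ℂ → ℂ)]
  rw [he] at h2
  simpa [Matrix.diag] using (Complex.le_def.mp h2).1

lemma trace_re_pos {n : Type*} [Fintype n] [DecidableEq n] {ρ : Matrix n n ℂ}
    (h : ρ.PosSemidef) (h0 : ρ ≠ 0) : 0 < ρ.trace.re := by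
  obtain ⟨B, rfl⟩ := psd_exists_ct h
  obtain ⟨k, j, hkj⟩ : ∃ k j, B k j ≠ 0 := by
    by_contra hc
    push_neg at hc
    exact h0 (by ext k j; simp [Matrix.mul_apply, hc])
  have he : (Bᴴ * B).trace.re = ∑ j, ∑ k, Complex.normSq (B k j) := by
    rw [Matrix.trace, Complex.re_sum]
    congr 1; ext j
    rw [Matrix.diag, Matrix.mul_apply, Complex.re_sum]
    congr 1; ext k
    rw [Matrix.conjTranspose_apply, Complex.star_def, mul_comm, Complex.mul_conj]
    simp
  rw [he]
  apply Finset.sum_pos' (fun _ _ => Finset.sum_nonneg fun _ _ => Complex.normSq_nonneg _)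
  exact ⟨j, Finset.mem_univ _, Finset.sum_pos'
    (fun _ _ => Complex.normSq_nonneg _)
    ⟨k, Finset.mem_univ _, Complex.normSq_pos.mpr hkj⟩⟩

lemma depol_normThresh_eq {n : ℕ} (ρ : Matrix (Fin n) (Fin n) ℂ) (l t : ℝ) :
    depol l (normThresh t ρ) =
      ((1 - l) / (max ρ.trace.re t)) • ρ + (l / (n : ℝ)) • (1 : Matrix (Fin n) (Fin n) ℂ) := by
  unfold depol normThresh
  ext i j
  simp only [Matrix.add_apply, Matrix.smul_apply, Complex.real_smul, smul_eq_mul,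
    Fintype.card_fin, div_eq_mul_inv, Complex.ofReal_mul, Complex.ofReal_inv]
  ring

/-- Monotonicity of the cross-entropy loss in the threshold hyperparameter `t`:
for a nonzero positive semidefinite `ρ`, a state `τ`, `λ ∈ (0,1]`, and `0 ≤ t₁ ≤ t₂`,
`-Tr(τ log Δ_λ(N_{t₁}(ρ))) ≤ -Tr(τ log Δ_λ(N_{t₂}(ρ)))`. -/
theorem crossEntropyLoss_monotone_threshold
    {n : ℕ} (hn : 0 < n)
    (ρ τ : Matrix (Fin n) (Fin n) ℂ)
    (hρ : ρ.PosSemidef) (hρ0 : ρ ≠ 0)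
    (hτ : τ.PosSemidef) (hτtr : τ.trace = 1)
    (l : ℝ) (hl0 : 0 < l) (hl1 : l ≤ 1)
    (t₁ t₂ : ℝ) (ht₁ : 0 ≤ t₁) (ht : t₁ ≤ t₂) :
    -(τ * matLog (depol l (normThresh t₁ ρ))).trace.re ≤
      -(τ * matLog (depol l (normThresh t₂ ρ))).trace.re := by
  classical
  have htr : 0 < ρ.trace.re := trace_re_pos hρ hρ0
  set c₁ := max ρ.trace.re t₁ with hc₁def
  set c₂ := max ρ.trace.re t₂ with hc₂def
  have hc₁ : 0 < c₁ := lt_of_lt_of_le htr (le_max_left _ _)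
  have hc₂ : 0 < c₂ := lt_of_lt_of_le htr (le_max_left _ _)
  have hcc : c₁ ≤ c₂ := max_le_max le_rfl ht
  set β := l / (n : ℝ) with hβdef
  have hβ : 0 < β := div_pos hl0 (by exact_mod_cast hn)
  set α₁ := (1 - l) / c₁ with hα₁def
  set α₂ := (1 - l) / c₂ with hα₂def
  have hα₂ : 0 ≤ α₂ := div_nonneg (by linarith) hc₂.le
  set s := c₂ / c₁ with hsdef
  have hs : 1 ≤ s := (one_le_div hc₁).2 hcc
  set A₁ := depol l (normThresh t₁ ρ) with hA₁def
  set A₂ := depol l (normThresh t₂ ρ) with hA₂def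
  have e₁ : A₁ = α₁ • ρ + β • 1 := depol_normThresh_eq ρ l t₁
  have e₂ : A₂ = α₂ • ρ + β • 1 := depol_normThresh_eq ρ l t₂
  have hH₁ : A₁.IsHermitian := e₁ ▸ herm_comb hρ.1 α₁ β
  have hH₂ : A₂.IsHermitian := e₂ ▸ herm_comb hρ.1 α₂ β
  have hsA₂ : IsSelfAdjoint A₂ := hH₂
  -- spectrum bound
  have hsp : spectrum ℝ A₂ ⊆ Set.Ici β := by
    intro x hx
    have hρ₂ : (α₂ • ρ).PosSemidef := psd_real_smul hρ hα₂
    have hmem : x - β + β ∈ spectrum ℝ A₂ := by simpa using hx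
    rw [spectrum.add_mem_iff] at hmem
    have heq : -(algebraMap ℝ (Matrix (Fin n) (Fin n) ℂ) β) + A₂ = α₂ • ρ := by
      rw [e₂, Algebra.algebraMap_eq_smul_one]
      abel
    rw [heq] at hmem
    rw [Matrix.IsHermitian.spectrum_real_eq_range_eigenvalues hρ₂.1] at hmem
    obtain ⟨i, hi⟩ := hmem
    have := hρ₂.eigenvalues_nonneg i
    rw [hi] at this
    simpa using le_add_of_nonneg_left (a := β) this
  have hspec_pos : ∀ x ∈ spectrum ℝ A₂, 0 < x := fun x hx => lt_of_lt_of_le hβ (hsp hx)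
  set g : ℝ → ℝ := fun x => s * x + β * (1 - s) with hgdef
  have hgc : Continuous g := by fun_prop
  have hgge : ∀ x ∈ spectrum ℝ A₂, x ≤ g x := by
    intro x hx
    have hb : β ≤ x := hsp hx
    simp only [hgdef]
    nlinarith [mul_nonneg (sub_nonneg.2 hs) (sub_nonneg.2 hb)]
  -- cfc g A₂ = A₁
  have hcfcg : cfc g A₂ = A₁ := by
    have h1 : cfc g A₂ = cfc (fun x => s * x) A₂
        + algebraMap ℝ (Matrix (Fin n) (Fin n) ℂ) (β * (1 - s)) :=
      cfc_add_const (β * (1 - s)) (fun x => s * x) A₂ (by fun_prop) hsA₂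
    rw [h1, cfc_const_mul_id s A₂ hsA₂, e₁, e₂, Algebra.algebraMap_eq_smul_one]
    rw [smul_add, smul_smul, smul_smul, add_assoc, ← add_smul]
    have h2 : s * α₂ = α₁ := by
      rw [hsdef, hα₂def, hα₁def]
      field_simp
    have h3 : s * β + β * (1 - s) = β := by ring
    rw [h2, h3]
  -- continuity facts
  have hlog2 : ContinuousOn Real.log (spectrum ℝ A₂) :=
    Real.continuousOn_log.mono fun x hx => (hspec_pos x hx).ne'
  have hlogg : ContinuousOn (fun x => Real.log (g x)) (spectrum ℝ A₂) := by
    apply Real.continuousOn_log.comp hgc.continuousOn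
    intro x hx
    exact (lt_of_lt_of_le (hspec_pos x hx) (hgge x hx)).ne'
  have hlogim : ContinuousOn Real.log (g '' spectrum ℝ A₂) := by
    apply Real.continuousOn_log.mono
    rintro y ⟨x, hx, rfl⟩
    exact (lt_of_lt_of_le (hspec_pos x hx) (hgge x hx)).ne'
  have hcomp : cfc Real.log A₁ = cfc (fun x => Real.log (g x)) A₂ := by
    rw [← hcfcg, ← cfc_comp' Real.log g A₂ hlogim hgc.continuousOn hsA₂]
  set D := cfc (fun x => Real.log (g x) - Real.log x) A₂ with hDdef
  have hsub : D = cfc Real.log A₁ - cfc Real.log A₂ := by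
    rw [hcomp, hDdef, cfc_sub (fun x => Real.log (g x)) Real.log A₂ hlogg hlog2]
  have hDpsd : D.PosSemidef := by
    rw [hDdef, hH₂.cfc_eq]
    unfold Matrix.IsHermitian.cfc
    rw [Unitary.conjStarAlgAut_apply, star_eq_conjTranspose]
    apply Matrix.PosSemidef.mul_mul_conjTranspose_same
    apply Matrix.PosSemidef.diagonal
    intro i
    have hxi : hH₂.eigenvalues i ∈ spectrum ℝ A₂ := hH₂.eigenvalues_mem_spectrum_real i
    have h0 : (0 : ℝ) ≤ Real.log (g (hH₂.eigenvalues i)) - Real.log (hH₂.eigenvalues i) := by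
      have := Real.log_le_log (hspec_pos _ hxi) (hgge _ hxi)
      linarith
    simpa [Function.comp] using Complex.zero_le_real.mpr h0
  have hm₁ : matLog A₁ = cfc Real.log A₁ := matLog_eq_cfc hH₁
  have hm₂ : matLog A₂ = cfc Real.log A₂ := matLog_eq_cfc hH₂
  have hkey : 0 ≤ (τ * D).trace.re := trace_mul_psd_re_nonneg hτ hDpsd
  have hdecomp : matLog A₁ = matLog A₂ + D := by
    rw [hm₁, hm₂, hsub]
    abel
  rw [hdecomp, mul_add, trace_add, Complex.add_re]
  linarith
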